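/- Let f : [a,b] → ℝ be continuously differentiable with f' Φ'-superadditive, where Φ : [0,b-a] → ℝ≥0 is continuously differentiable, convex, Φ' ≥ 0, Φ(0) = 0. Let a₁,...,aₙ satisfy the Jensen–Steffensen conditions, x₁ ≤ ... ≤ xₙ in [a,b], x̄ = (1/Aₙ)∑aᵢxᵢ. Then for every c ∈ [a,b]: (1/Aₙ)∑ aᵢ f(xᵢ) - f(c) - f'(c)(x̄ - c) ≥ (1/Aₙ)∑ aᵢ Φ(|xᵢ - c|) ≥ 0. -/

import Mathlib

open Finset

lemma abel1 (S u : ℕ → ℝ) : ∀ k : ℕ,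
    ∑ i ∈ range (k+1), (S (i+1) - S i) * u i
      = S (k+1) * u k - S 0 * u 0 + ∑ i ∈ range k, S (i+1) * (u i - u (i+1)) := by
  intro k
  induction k with
  | zero => simp; ring
  | succ k ih =>
      rw [Finset.sum_range_succ, ih, Finset.sum_range_succ]
      ring

lemma abel2 (R v : ℕ → ℝ) : ∀ k : ℕ,
    ∑ i ∈ range (k+1), (R i - R (i+1)) * v i
      = R 0 * v 0 - R (k+1) * v k + ∑ i ∈ range k, R (i+1) * (v (i+1) - v i) := by
  intro k
  induction k with
  | zero => simp; ring
  | succ k ih =>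
      rw [Finset.sum_range_succ, ih, Finset.sum_range_succ]
      ring

lemma js_nonneg (n m : ℕ) (hmn : m ≤ n) (w u : ℕ → ℝ) (A : ℝ)
    (hA : A = ∑ i ∈ range n, w i)
    (hJS : ∀ j ≤ n, 0 ≤ ∑ i ∈ range j, w i ∧ ∑ i ∈ range j, w i ≤ A)
    (hu : ∀ i < n, 0 ≤ u i)
    (hdec : ∀ i, i + 1 < m → u (i+1) ≤ u i)
    (hinc : ∀ i, m ≤ i → i + 1 < n → u i ≤ u (i+1)) :
    0 ≤ ∑ i ∈ range n, w i * u i := by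
  set S : ℕ → ℝ := fun j => ∑ i ∈ range j, w i with hS
  have hw : ∀ i, w i = S (i+1) - S i := by
    intro i; simp [hS, Finset.sum_range_succ]
  obtain ⟨k, hk⟩ : ∃ k, n = m + k := ⟨n - m, (Nat.add_sub_cancel' hmn).symm⟩
  subst hk
  rw [Finset.sum_range_add]
  have h1 : 0 ≤ ∑ i ∈ range m, w i * u i := by
    rcases Nat.eq_zero_or_pos m with hm | hm
    · simp [hm]
    · obtain ⟨m', rfl⟩ : ∃ m', m = m' + 1 := ⟨m - 1, (Nat.succ_pred_eq_of_pos hm).symm⟩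
      have he : ∑ i ∈ range (m'+1), w i * u i
          = ∑ i ∈ range (m'+1), (S (i+1) - S i) * u i :=
        Finset.sum_congr rfl fun i _ => by rw [← hw]
      rw [he, abel1]
      have hS0 : S 0 = 0 := by simp [hS]
      rw [hS0]
      have t1 : 0 ≤ S (m'+1) * u m' :=
        mul_nonneg ((hJS (m'+1) hmn).1) (hu m' (by omega))
      have t2 : 0 ≤ ∑ i ∈ range m', S (i+1) * (u i - u (i+1)) := by
        refine Finset.sum_nonneg fun i hi => ?_
        rw [Finset.mem_range] at hi
        exact mul_nonneg ((hJS (i+1) (by omega)).1)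
          (sub_nonneg.mpr (hdec i (by omega)))
      linarith
  have h2 : 0 ≤ ∑ i ∈ range k, w (m + i) * u (m + i) := by
    rcases Nat.eq_zero_or_pos k with hk0 | hk0
    · simp [hk0]
    · obtain ⟨k', rfl⟩ : ∃ k', k = k' + 1 := ⟨k - 1, (Nat.succ_pred_eq_of_pos hk0).symm⟩
      set R : ℕ → ℝ := fun i => A - S (m + i) with hR
      have he : ∑ i ∈ range (k'+1), w (m + i) * u (m + i)
          = ∑ i ∈ range (k'+1), (R i - R (i+1)) * u (m + i) := by
        refine Finset.sum_congr rfl fun i _ => ?_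
        have hr : R i - R (i+1) = S (m + (i+1)) - S (m + i) := by
          simp [hR]
        rw [hr, show m + (i+1) = (m + i) + 1 by omega, ← hw]
      rw [he, abel2 R (fun i => u (m + i))]
      have hRend : R (k'+1) = 0 := by
        simp only [hR, hA, hS]; ring
      have t1 : 0 ≤ R 0 * u (m + 0) := by
        have : 0 ≤ R 0 := by
          simp only [hR, Nat.add_zero, sub_nonneg]
          exact (hJS m (by omega)).2
        exact mul_nonneg this (hu m (by omega))
      have t2 : 0 ≤ ∑ i ∈ range k', R (i+1) * (u (m + (i+1)) - u (m + i)) := by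
        refine Finset.sum_nonneg fun i hi => ?_
        rw [Finset.mem_range] at hi
        have hr : 0 ≤ R (i+1) := by
          simp only [hR, sub_nonneg]
          exact (hJS (m + (i+1)) (by omega)).2
        refine mul_nonneg hr (sub_nonneg.mpr ?_)
        rw [show m + (i+1) = (m + i) + 1 by omega]
        exact hinc (m + i) (by omega) (by omega)
      rw [hRend]
      simp only [zero_mul, sub_zero] at *
      linarith
  linarith

lemma mono_of_deriv' (p q : ℝ) (F F' : ℝ → ℝ)
    (hF : ∀ t ∈ Set.Icc p q, HasDerivAt F (F' t) t)
    (h0 : ∀ t ∈ Set.Ioo p q, 0 ≤ F' t) : MonotoneOn F (Set.Icc p q) := by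
  refine monotoneOn_of_deriv_nonneg (convex_Icc p q)
    (fun t ht => (hF t ht).continuousAt.continuousWithinAt) ?_ ?_
  · rw [interior_Icc]
    exact fun t ht => (hF t (Set.Ioo_subset_Icc_self ht)).differentiableAt.differentiableWithinAt
  · rw [interior_Icc]
    intro t ht
    rw [(hF t (Set.Ioo_subset_Icc_self ht)).deriv]
    exact h0 t ht

lemma anti_of_deriv' (p q : ℝ) (F F' : ℝ → ℝ)
    (hF : ∀ t ∈ Set.Icc p q, HasDerivAt F (F' t) t)
    (h0 : ∀ t ∈ Set.Ioo p q, F' t ≤ 0) : AntitoneOn F (Set.Icc p q) := by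
  refine antitoneOn_of_deriv_nonpos (convex_Icc p q)
    (fun t ht => (hF t ht).continuousAt.continuousWithinAt) ?_ ?_
  · rw [interior_Icc]
    exact fun t ht => (hF t (Set.Ioo_subset_Icc_self ht)).differentiableAt.differentiableWithinAt
  · rw [interior_Icc]
    intro t ht
    rw [(hF t (Set.Ioo_subset_Icc_self ht)).deriv]
    exact h0 t ht

/-- refined Jensen–Steffensen inequality with convex modulus Φ. -/
theorem stmt4 (a b : ℝ) (hab : a < b) (f f' Φ Φ' : ℝ → ℝ)
    (hf : ∀ x ∈ Set.Icc a b, HasDerivAt f (f' x) x)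
    (hf'c : ContinuousOn f' (Set.Icc a b))
    (hΦ : ∀ x ∈ Set.Icc 0 (b - a), HasDerivAt Φ (Φ' x) x)
    (hΦ'c : ContinuousOn Φ' (Set.Icc 0 (b - a)))
    (hΦnn : ∀ x ∈ Set.Icc 0 (b - a), 0 ≤ Φ x)
    (hΦ'nn : ∀ x ∈ Set.Icc 0 (b - a), 0 ≤ Φ' x)
    (hΦ0 : Φ 0 = 0)
    (hΦconv : ConvexOn ℝ (Set.Icc 0 (b - a)) Φ)
    (hsup : ∀ x y, a ≤ x → x ≤ y → y ≤ b → Φ' (y - x) ≤ f' y - f' x)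
    (n : ℕ) (hn : 0 < n) (w x : ℕ → ℝ) (A xbar : ℝ)
    (hA : A = ∑ i ∈ Finset.range n, w i) (hApos : 0 < A)
    (hJS : ∀ j ≤ n, 0 ≤ ∑ i ∈ Finset.range j, w i ∧ ∑ i ∈ Finset.range j, w i ≤ A)
    (hx : ∀ i < n, x i ∈ Set.Icc a b)
    (hmono : ∀ i j, i ≤ j → j < n → x i ≤ x j)
    (hxbar : xbar = (1 / A) * ∑ i ∈ Finset.range n, w i * x i) :
    ∀ c ∈ Set.Icc a b,
      (1 / A) * ∑ i ∈ Finset.range n, w i * Φ |x i - c| ≤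
          (1 / A) * ∑ i ∈ Finset.range n, w i * f (x i) - f c - f' c * (xbar - c) ∧
        0 ≤ (1 / A) * ∑ i ∈ Finset.range n, w i * Φ |x i - c| := by
  intro c hc
  obtain ⟨hac, hcb⟩ := hc
  -- the splitting index
  have hPex : ∃ i, i = n ∨ (i < n ∧ c ≤ x i) := ⟨n, Or.inl rfl⟩
  classical
  set m := Nat.find hPex with hm
  have hmn : m ≤ n := Nat.find_min' hPex (Or.inl rfl)
  have hlt : ∀ i < m, x i < c := by
    intro i hi
    have := Nat.find_min hPex hi
    push_neg at this
    exact this.2 (by omega)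
  have hge : ∀ i, m ≤ i → i < n → c ≤ x i := by
    intro i hmi hin
    have hspec := Nat.find_spec hPex
    rw [← hm] at hspec
    rcases hspec with h | h
    · omega
    · exact h.2.trans (hmono m i hmi hin)
  -- membership of increments in [0, b-a]
  have hmemR : ∀ t, c ≤ t → t ≤ b → t - c ∈ Set.Icc 0 (b - a) :=
    fun t h1 h2 => ⟨by linarith, by linarith⟩
  have hmemL : ∀ t, a ≤ t → t ≤ c → c - t ∈ Set.Icc 0 (b - a) :=
    fun t h1 h2 => ⟨by linarith, by linarith⟩
  -- derivative of the right branch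
  have hG : ∀ t ∈ Set.Icc c b,
      HasDerivAt (fun t => f t - f c - f' c * (t - c) - Φ (t - c))
        (f' t - f' c - Φ' (t - c)) t := by
    intro t ht
    have h1 := hf t ⟨hac.trans ht.1, ht.2⟩
    have h2 : HasDerivAt (fun t => Φ (t - c)) (Φ' (t - c)) t := by
      have := (hΦ (t - c) (hmemR t ht.1 ht.2)).comp t ((hasDerivAt_id t).sub_const c)
      simp at this
      exact this
    have h3 : HasDerivAt (fun t => f' c * (t - c)) (f' c) t := by
      simpa using ((hasDerivAt_id t).sub_const c).const_mul (f' c)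
    exact ((h1.sub_const (f c)).sub h3).sub h2
  have hH : ∀ t ∈ Set.Icc a c,
      HasDerivAt (fun t => f t - f c - f' c * (t - c) - Φ (c - t))
        (f' t - f' c + Φ' (c - t)) t := by
    intro t ht
    have h1 := hf t ⟨ht.1, ht.2.trans hcb⟩
    have h2 : HasDerivAt (fun s => Φ (c - s)) (-Φ' (c - t)) t := by
      have hinner : HasDerivAt (fun s : ℝ => c - s) (-1) t := by
        have h := (hasDerivAt_const t c).sub (hasDerivAt_id t)
        simp at h
        exact h
      have := (hΦ (c - t) (hmemL t ht.1 ht.2)).comp t hinner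
      simp at this
      exact this
    have h3 : HasDerivAt (fun t => f' c * (t - c)) (f' c) t := by
      simpa using ((hasDerivAt_id t).sub_const c).const_mul (f' c)
    have := ((h1.sub_const (f c)).sub h3).sub h2
    rw [show f' t - f' c + Φ' (c - t) = f' t - f' c - -Φ' (c - t) by ring]
    exact this
  have hGmono : MonotoneOn (fun t => f t - f c - f' c * (t - c) - Φ (t - c)) (Set.Icc c b) := by
    refine mono_of_deriv' c b _ _ hG ?_
    intro t ht
    have := hsup c t hac ht.1.le (ht.2.le.trans (le_refl b))
    linarith
  have hHanti : AntitoneOn (fun t => f t - f c - f' c * (t - c) - Φ (c - t)) (Set.Icc a c) := by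
    refine anti_of_deriv' a c _ _ hH ?_
    intro t ht
    have := hsup t c ht.1.le ht.2.le hcb
    linarith
  -- g and its properties
  set g : ℝ → ℝ := fun t => f t - f c - f' c * (t - c) - Φ |t - c| with hgdef
  have hgR : ∀ t, c ≤ t → g t = f t - f c - f' c * (t - c) - Φ (t - c) := by
    intro t ht; simp only [hgdef, abs_of_nonneg (by linarith : (0:ℝ) ≤ t - c)]
  have hgL : ∀ t, t ≤ c → g t = f t - f c - f' c * (t - c) - Φ (c - t) := by
    intro t ht
    have : |t - c| = c - t := by rw [abs_of_nonpos (by linarith)]; ring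
    simp only [hgdef, this]
  have hgc : g c = 0 := by simp [hgdef, hΦ0]
  have hg0 : ∀ t ∈ Set.Icc a b, 0 ≤ g t := by
    intro t ht
    rcases le_total t c with h | h
    · rw [hgL t h]
      have h5 : f c - f c - f' c * (c - c) - Φ (c - c)
          ≤ f t - f c - f' c * (t - c) - Φ (c - t) :=
        hHanti ⟨ht.1, h⟩ ⟨hac, le_refl c⟩ h
      have hc0 : f c - f c - f' c * (c - c) - Φ (c - c) = 0 := by simp [hΦ0]
      linarith
    · rw [hgR t h]
      have h5 : f c - f c - f' c * (c - c) - Φ (c - c)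
          ≤ f t - f c - f' c * (t - c) - Φ (t - c) :=
        hGmono ⟨le_refl c, hcb⟩ ⟨h, ht.2⟩ h
      have hc0 : f c - f c - f' c * (c - c) - Φ (c - c) = 0 := by simp [hΦ0]
      linarith
  -- key sum 1 : 0 ≤ ∑ w i * g (x i)
  have key1 : 0 ≤ ∑ i ∈ Finset.range n, w i * g (x i) := by
    refine js_nonneg n m hmn w (fun i => g (x i)) A hA hJS
      (fun i hi => hg0 (x i) (hx i hi)) ?_ ?_
    · intro i hi
      have hxi := hx i (by omega); have hxi1 := hx (i+1) (by omega)
      have h1 : x (i+1) ≤ c := (hlt (i+1) hi).le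
      have h0 : x i ≤ c := ((hmono i (i+1) (by omega) (by omega)).trans h1)
      show g (x (i+1)) ≤ g (x i)
      rw [hgL _ h1, hgL _ h0]
      exact hHanti ⟨hxi.1, h0⟩ ⟨hxi1.1, h1⟩ (hmono i (i+1) (by omega) (by omega))
    · intro i hmi hi
      have hxi := hx i (by omega); have hxi1 := hx (i+1) (by omega)
      have h0 : c ≤ x i := hge i hmi (by omega)
      have h1 : c ≤ x (i+1) := h0.trans (hmono i (i+1) (by omega) (by omega))
      show g (x i) ≤ g (x (i+1))
      rw [hgR _ h0, hgR _ h1]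
      exact hGmono ⟨h0, hxi.2⟩ ⟨h1, hxi1.2⟩ (hmono i (i+1) (by omega) (by omega))
  -- key sum 2 : 0 ≤ ∑ w i * Φ |x i - c|
  have hΦmono : MonotoneOn Φ (Set.Icc 0 (b - a)) := by
    refine mono_of_deriv' 0 (b - a) Φ Φ' hΦ ?_
    exact fun t ht => hΦ'nn t (Set.Ioo_subset_Icc_self ht)
  have habs : ∀ i < n, |x i - c| ∈ Set.Icc 0 (b - a) := by
    intro i hi
    have hxi := hx i hi
    constructor
    · exact abs_nonneg _
    · rcases le_total (x i) c with h | h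
      · rw [abs_of_nonpos (by linarith)]
        have := hxi.1; linarith
      · rw [abs_of_nonneg (by linarith)]
        have := hxi.2; linarith
  have key2 : 0 ≤ ∑ i ∈ Finset.range n, w i * Φ |x i - c| := by
    refine js_nonneg n m hmn w (fun i => Φ |x i - c|) A hA hJS
      (fun i hi => hΦnn _ (habs i hi)) ?_ ?_
    · intro i hi
      have h1 : x (i+1) ≤ c := (hlt (i+1) hi).le
      have h0 : x i ≤ x (i+1) := hmono i (i+1) (by omega) (by omega)
      refine hΦmono (habs (i+1) (by omega)) (habs i (by omega)) ?_
      rw [abs_of_nonpos (by linarith), abs_of_nonpos (by linarith)]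
      linarith
    · intro i hmi hi
      have h0 : c ≤ x i := hge i hmi (by omega)
      have h1 : x i ≤ x (i+1) := hmono i (i+1) (by omega) (by omega)
      refine hΦmono (habs i (by omega)) (habs (i+1) (by omega)) ?_
      rw [abs_of_nonneg (by linarith), abs_of_nonneg (by linarith)]
      linarith
  have hA' : A ≠ 0 := ne_of_gt hApos
  constructor
  · -- expand key1
    have expand : ∑ i ∈ Finset.range n, w i * g (x i)
        = (∑ i ∈ Finset.range n, w i * f (x i)) - A * f c
          - f' c * ((∑ i ∈ Finset.range n, w i * x i) - A * c)
          - ∑ i ∈ Finset.range n, w i * Φ |x i - c| := by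
      have step : ∀ i, w i * g (x i)
          = w i * f (x i) - w i * f c - f' c * (w i * x i - w i * c)
            - w i * Φ |x i - c| := by
        intro i; simp only [hgdef]; ring
      have e3 : ∑ i ∈ Finset.range n, f' c * (w i * x i - w i * c)
          = f' c * ((∑ i ∈ Finset.range n, w i * x i)
              - (∑ i ∈ Finset.range n, w i) * c) := by
        rw [← Finset.mul_sum, Finset.sum_sub_distrib, ← Finset.sum_mul]
      have e1 : ∑ i ∈ Finset.range n, w i * f c
          = (∑ i ∈ Finset.range n, w i) * f c := (Finset.sum_mul _ _ _).symm
      rw [Finset.sum_congr rfl fun i _ => step i, Finset.sum_sub_distrib,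
        Finset.sum_sub_distrib, Finset.sum_sub_distrib, e1, e3, hA]
    rw [expand] at key1
    rw [hxbar]
    have h' : 0 ≤ (1/A) * ((∑ i ∈ Finset.range n, w i * f (x i)) - A * f c
          - f' c * ((∑ i ∈ Finset.range n, w i * x i) - A * c)
          - ∑ i ∈ Finset.range n, w i * Φ |x i - c|) :=
      mul_nonneg (by positivity) key1
    have h2 : (1/A) * ((∑ i ∈ Finset.range n, w i * f (x i)) - A * f c
          - f' c * ((∑ i ∈ Finset.range n, w i * x i) - A * c)
          - ∑ i ∈ Finset.range n, w i * Φ |x i - c|)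
        = (1/A) * (∑ i ∈ Finset.range n, w i * f (x i)) - f c
          - f' c * ((1/A) * (∑ i ∈ Finset.range n, w i * x i) - c)
          - (1/A) * ∑ i ∈ Finset.range n, w i * Φ |x i - c| := by
      field_simp
    rw [h2] at h'
    linarith
  · exact mul_nonneg (by positivity) key2
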